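/- Let G be a non-Abelian subgroup of Homeo₊(I) such that every non-identity element of G has finitely many fixed points in (0,1). Then G contains a crossed pair, and consequently G contains a free semigroup on two generators. -/

import Mathlib

noncomputable section

/-- The unit interval `[0,1] ⊆ ℝ`. -/
abbrev unitI : Set ℝ := Set.Icc (0:ℝ) 1

/-- Ambient group: bijections of the unit interval. -/
abbrev IntervalMap : Type := Equiv.Perm ↥unitI

/-- The extension of `σ` to `ℝ`, by the identity outside `[0,1]`. -/
def toReal (σ : IntervalMap) : ℝ → ℝ :=
  fun x => if h : x ∈ unitI then (σ ⟨x, h⟩ : ℝ) else x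

/-- `σ` is an orientation-preserving homeomorphism of `[0,1]` (a strictly
increasing bijection of `[0,1]`; such a map automatically fixes `0` and `1`
and is continuous). -/
def IsOPH (σ : IntervalMap) : Prop := StrictMono fun x : ↥unitI => (σ x : ℝ)

/-- `σ` extends to a `C¹` function on `[0,1]`. -/
def IsC1On (σ : IntervalMap) : Prop := ContDiffOn ℝ 1 (toReal σ) unitI

/-- `σ` is an orientation-preserving `C¹` diffeomorphism of `[0,1]`. -/
def IsOPD (σ : IntervalMap) : Prop := IsOPH σ ∧ IsC1On σ ∧ IsC1On σ⁻¹

/-- `Γ` is a subgroup of `Diff₊(I)`. -/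
def DiffSubgroup (Γ : Subgroup IntervalMap) : Prop := ∀ γ ∈ Γ, IsOPD γ

/-- `Γ` is a subgroup of `Homeo₊(I)`. -/
def HomeoSubgroup (Γ : Subgroup IntervalMap) : Prop := ∀ γ ∈ Γ, IsOPH γ

/-- The set of fixed points of `σ` in the open interval `(0,1)`. -/
def FixPts (σ : IntervalMap) : Set ↥unitI :=
  {x : ↥unitI | σ x = x ∧ 0 < (x : ℝ) ∧ (x : ℝ) < 1}

/-- Every non-identity element of `Γ` has finitely many fixed points in `(0,1)`. -/
def FinFix (Γ : Subgroup IntervalMap) : Prop := ∀ γ ∈ Γ, γ ≠ 1 → (FixPts γ).Finite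

/-- The `C⁰`-norm `‖σ‖ = sup_{x ∈ [0,1]} |σ(x) - x|`. -/
def C0norm (σ : IntervalMap) : ℝ := ⨆ x : ↥unitI, |(σ x : ℝ) - (x : ℝ)|

/-- `Γ` is locally transitive. -/
def LocTrans (Γ : Subgroup IntervalMap) : Prop :=
  ∀ p : ↥unitI, 0 < (p : ℝ) → (p : ℝ) < 1 → ∀ ε : ℝ, 0 < ε →
    ∃ γ ∈ Γ, C0norm γ < ε ∧ γ p ≠ p

/-- `Γ` is irreducible: no global fixed point in `(0,1)`. -/
def Irred (Γ : Subgroup IntervalMap) : Prop :=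
  ¬ ∃ p : ↥unitI, 0 < (p : ℝ) ∧ (p : ℝ) < 1 ∧ ∀ γ ∈ Γ, γ p = p

/-- The group `Aff₊(ℝ)` of orientation-preserving affine maps `x ↦ a x + b`,
`a > 0`, as a subgroup of the permutation group of `ℝ`. -/
def AffPlus : Subgroup (Equiv.Perm ℝ) where
  carrier := {e | ∃ a b : ℝ, 0 < a ∧ ∀ x, e x = a * x + b}
  one_mem' := ⟨1, 0, one_pos, fun x => by simp⟩
  mul_mem' := by
    rintro e f ⟨a, b, ha, he⟩ ⟨c, d, hc, hf⟩
    refine ⟨a * c, a * d + b, mul_pos ha hc, fun x => ?_⟩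
    rw [Equiv.Perm.mul_apply, hf, he]; ring
  inv_mem' := by
    rintro e ⟨a, b, ha, he⟩
    refine ⟨a⁻¹, -b / a, by positivity, fun y => ?_⟩
    apply e.injective
    rw [show e (e⁻¹ y) = y from e.apply_symm_apply y, he]
    first | (field_simp; done) | (field_simp; ring)

/-- `G` embeds into (i.e. is isomorphic to a subgroup of) `Aff₊(ℝ)`. -/
def EmbedsInAff (G : Type*) [Group G] : Prop :=
  ∃ φ : G →* ↥AffPlus, Function.Injective φ

/-- `G` embeds into `Aff₊(ℝ)ⁿ` for some `n ≥ 1`. -/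
def EmbedsInAffPow (G : Type*) [Group G] : Prop :=
  ∃ n : ℕ, 1 ≤ n ∧ ∃ φ : G →* (Fin n → ↥AffPlus), Function.Injective φ

/-- `G` has infinite girth: for every `m` there is a finite generating set `S`
such that no non-trivial reduced word of length at most `m` in `S ∪ S⁻¹`
represents the identity. -/
def HasInfiniteGirth (G : Type*) [Group G] : Prop :=
  ∀ m : ℕ, ∃ S : Finset G, Subgroup.closure (S : Set G) = ⊤ ∧
    ∀ w : FreeGroup {x // x ∈ S}, w ≠ 1 →
      (∃ l : List ({x // x ∈ S} × Bool), l.length ≤ m ∧ FreeGroup.mk l = w) →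
      FreeGroup.lift (fun s => (s : G)) w ≠ 1

/-- `a` and `b` generate a free semigroup on two generators: distinct
non-empty positive words in `a, b` give distinct elements. -/
def FreeSemigroupPair {G : Type*} [Group G] (a b : G) : Prop :=
  Function.Injective
    ⇑(FreeSemigroup.lift (fun x : Bool => if x then a else b) : FreeSemigroup Bool →ₙ* G)

/-- `g < f` in the biorder: `g(x) < f(x)` near `0`. -/
def ltNear (g f : IntervalMap) : Prop :=
  ∃ δ : ℝ, 0 < δ ∧ ∀ x : ↥unitI, 0 < (x : ℝ) → (x : ℝ) < δ → (g x : ℝ) < (f x : ℝ)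

/-- `g ≤ f` in the biorder. -/
def leNear (g f : IntervalMap) : Prop := ltNear g f ∨ g = f

/-- `g << f`: `g` is infinitesimal with respect to `f`, i.e. `gⁿ < f` for all `n ∈ ℤ`. -/
def Infinitesimal (g f : IntervalMap) : Prop := ∀ n : ℤ, ltNear (g ^ n) f

/-- `(f, g)` is a crossed pair on the interval `(a,b)`: `f` fixes `a` and `b`
but no point strictly between them, while `g` maps `a` or `b` into `(a,b)`. -/
def CrossedOn (f g : IntervalMap) (a b : ↥unitI) : Prop :=
  f a = a ∧ f b = b ∧ (∀ x : ↥unitI, (a : ℝ) < x → (x : ℝ) < b → f x ≠ x) ∧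
  (((a : ℝ) < (g a : ℝ) ∧ (g a : ℝ) < b) ∨ ((a : ℝ) < (g b : ℝ) ∧ (g b : ℝ) < b))

/-- `(f, g)` is a crossed pair. -/
def CrossedPair (f g : IntervalMap) : Prop :=
  ∃ a b : ↥unitI, (a : ℝ) < b ∧ (CrossedOn f g a b ∨ CrossedOn g f a b)

/-- The auxiliary point configuration used in weak transitivity:
`extPt γ p 0 = 0`, `extPt γ p j = γ(pⱼ)` for `1 ≤ j ≤ k` (here `pⱼ = p ⟨j-1⟩`
in `0`-indexed notation), and `extPt γ p (k+1) = 1`. -/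
def extPt (γ : IntervalMap) {k : ℕ} (p : Fin k → ↥unitI) (j : ℕ) : ℝ :=
  if j = 0 then 0 else if h : j - 1 < k then (γ (p ⟨j - 1, h⟩) : ℝ) else 1

/-- `Γ` is weakly `k`-transitive. -/
def WeaklyKTrans (Γ : Subgroup IntervalMap) (k : ℕ) : Prop :=
  ∀ g ∈ Γ, ∀ p : Fin k → ↥unitI,
    (∀ i, 0 < (p i : ℝ) ∧ (p i : ℝ) < 1) →
    (StrictMono fun i => (p i : ℝ)) →
    ∀ ε : ℝ, 0 < ε →
      ∃ γ ∈ Γ, extPt γ p k < ε ∧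
        ∀ i : Fin k,
          extPt γ p i.val < (g (γ (p i)) : ℝ) ∧
            (g (γ (p i)) : ℝ) < extPt γ p (i.val + 2)

/-- `Γ` is weakly transitive. -/
def WeakTrans (Γ : Subgroup IntervalMap) : Prop := ∀ k : ℕ, 1 ≤ k → WeaklyKTrans Γ k

namespace Stmt13Aux

open Set

abbrev e0 : ↥unitI := ⟨0, by constructor <;> norm_num⟩
abbrev e1 : ↥unitI := ⟨1, by constructor <;> norm_num⟩

lemma le_e1 (x : ↥unitI) : (x : ℝ) ≤ 1 := x.2.2
lemma e0_le (x : ↥unitI) : (0 : ℝ) ≤ x := x.2.1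

lemma oph_inv {σ : IntervalMap} (h : IsOPH σ) : IsOPH σ⁻¹ := by
  intro a b hab
  rcases lt_trichotomy (σ⁻¹ a) (σ⁻¹ b) with hc | hc | hc
  · exact_mod_cast Subtype.coe_lt_coe.2 hc
  · exfalso
    have : a = b := by
      have := congrArg σ hc
      simpa using this
    exact absurd this (ne_of_lt hab)
  · exfalso
    have h2 := h hc
    simp only [Equiv.Perm.coe_inv, Equiv.apply_symm_apply] at h2
    exact absurd h2 (not_lt.2 (le_of_lt (Subtype.coe_lt_coe.2 hab)))

lemma fix_e0 {σ : IntervalMap} (h : IsOPH σ) : σ e0 = e0 := by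
  have h1 : (σ e0 : ℝ) ≤ (σ (σ⁻¹ e0) : ℝ) := h.monotone (by
    have := e0_le (σ⁻¹ e0)
    exact Subtype.coe_le_coe.1 (by exact_mod_cast this))
  simp only [Equiv.Perm.coe_inv, Equiv.apply_symm_apply] at h1
  have h2 : (0:ℝ) ≤ (σ e0 : ℝ) := e0_le _
  apply Subtype.ext
  exact le_antisymm (by exact_mod_cast h1) (by exact_mod_cast h2)

lemma fix_e1 {σ : IntervalMap} (h : IsOPH σ) : σ e1 = e1 := by
  have h1 : (σ (σ⁻¹ e1) : ℝ) ≤ (σ e1 : ℝ) := h.monotone (by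
    have := le_e1 (σ⁻¹ e1)
    exact Subtype.coe_le_coe.1 (by exact_mod_cast this))
  simp only [Equiv.Perm.coe_inv, Equiv.apply_symm_apply] at h1
  have h2 : (σ e1 : ℝ) ≤ 1 := le_e1 _
  apply Subtype.ext
  exact le_antisymm (by exact_mod_cast h2) (by exact_mod_cast h1)

end Stmt13Aux
namespace Stmt13Aux

lemma tarski {σ : IntervalMap} (h : IsOPH σ) {x y : ↥unitI} (hxy : (x:ℝ) < y)
    (hx : (x:ℝ) < σ x) (hy : (σ y : ℝ) < y) :
    ∃ z : ↥unitI, σ z = z ∧ (x:ℝ) < z ∧ (z:ℝ) < y := by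
  set A : Set ℝ := {t : ℝ | ∃ u : ↥unitI, (u:ℝ) = t ∧ (x:ℝ) ≤ u ∧ (u:ℝ) ≤ y ∧ (u:ℝ) ≤ σ u}
    with hA
  have hxA : (x:ℝ) ∈ A := ⟨x, rfl, le_refl _, le_of_lt hxy, le_of_lt hx⟩
  have hbdd : BddAbove A := by
    refine ⟨(y:ℝ), fun t ht => ?_⟩
    obtain ⟨u, hu, -, h2, -⟩ := ht
    exact hu ▸ h2
  have hne : A.Nonempty := ⟨_, hxA⟩
  set s := sSup A with hs
  have hxs : (x:ℝ) ≤ s := le_csSup hbdd hxA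
  have hsy : s ≤ (y:ℝ) := csSup_le hne (by rintro t ⟨u, rfl, -, h2, -⟩; exact h2)
  have hsI : s ∈ unitI := ⟨le_trans x.2.1 hxs, le_trans hsy y.2.2⟩
  set S : ↥unitI := ⟨s, hsI⟩ with hS
  have hmono := h.monotone
  have claim1 : (S:ℝ) ≤ σ S := by
    apply csSup_le hne
    rintro t ⟨u, rfl, h1, h2, h3⟩
    have huS : u ≤ S := by
      apply Subtype.coe_le_coe.1
      exact le_csSup hbdd ⟨u, rfl, h1, h2, h3⟩
    exact le_trans h3 (hmono huS)
  have hSy : (S:ℝ) ≤ y := hsy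
  have hSlty : S < y := by
    rcases lt_or_eq_of_le hSy with h' | h'
    · exact Subtype.coe_lt_coe.1 h'
    · exfalso
      have : (σ S : ℝ) = σ y := by rw [Subtype.ext (h' : (S:ℝ) = y)]
      rw [this] at claim1
      exact absurd (lt_of_le_of_lt (h' ▸ claim1) hy) (lt_irrefl _)
  have claim2 : (σ S : ℝ) ∈ A := by
    refine ⟨σ S, rfl, le_trans hxs claim1, ?_, ?_⟩
    · exact le_trans (hmono hSlty.le) hy.le
    · exact hmono (Subtype.coe_le_coe.1 claim1)
  have claim3 : (σ S : ℝ) ≤ s := le_csSup hbdd claim2 |>.trans_eq rfl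
  have hfix : σ S = S := Subtype.ext (le_antisymm claim3 claim1)
  refine ⟨S, hfix, ?_, ?_⟩
  · rcases lt_or_eq_of_le hxs with h' | h'
    · exact h'
    · exfalso
      have hxS : x = S := Subtype.ext h'
      have : σ x = x := by rw [hxS, hfix]
      rw [this] at hx; exact lt_irrefl _ hx
  · rcases lt_or_eq_of_le hSy with h' | h'
    · exact h'
    · exfalso
      have hyS : S = y := Subtype.ext h'
      rw [hyS] at hfix
      rw [hfix] at hy; exact lt_irrefl _ hy

lemma sign_up {σ : IntervalMap} (h : IsOPH σ) {c d : ↥unitI}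
    (hfpf : ∀ x : ↥unitI, (c:ℝ) < x → (x:ℝ) < d → σ x ≠ x)
    {p : ↥unitI} (hp1 : (c:ℝ) < p) (hp2 : (p:ℝ) < d) (hup : (p:ℝ) < σ p) :
    ∀ x : ↥unitI, (c:ℝ) < x → (x:ℝ) < d → (x:ℝ) < σ x := by
  intro x hx1 hx2
  rcases lt_trichotomy ((x:ℝ)) (σ x) with h' | h' | h'
  · exact h'
  · exact absurd (Subtype.ext h'.symm) (hfpf x hx1 hx2)
  · exfalso
    rcases lt_trichotomy ((p:ℝ)) x with hc | hc | hc
    · obtain ⟨z, hz, hz1, hz2⟩ := tarski h hc hup h'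
      exact hfpf z (lt_trans hp1 hz1) (lt_trans hz2 hx2) hz
    · rw [Subtype.ext hc] at hup; exact absurd hup (not_lt.2 h'.le)
    · have hinv := oph_inv h
      have hx' : (x:ℝ) < σ⁻¹ x := by
        have := hinv h'
        simpa using this
      have hp' : (σ⁻¹ p : ℝ) < p := by
        have := hinv hup
        simpa using this
      obtain ⟨z, hz, hz1, hz2⟩ := tarski hinv hc hx' hp'
      have : σ z = z := by
        have := congrArg σ hz
        simpa using this.symm
      exact hfpf z (lt_trans hx1 hz1) (lt_trans hz2 hp2) this

lemma sign_down {σ : IntervalMap} (h : IsOPH σ) {c d : ↥unitI}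
    (hfpf : ∀ x : ↥unitI, (c:ℝ) < x → (x:ℝ) < d → σ x ≠ x)
    {p : ↥unitI} (hp1 : (c:ℝ) < p) (hp2 : (p:ℝ) < d) (hup : (σ p:ℝ) < p) :
    ∀ x : ↥unitI, (c:ℝ) < x → (x:ℝ) < d → (σ x:ℝ) < x := by
  have hinv := oph_inv h
  have hfpf' : ∀ x : ↥unitI, (c:ℝ) < x → (x:ℝ) < d → σ⁻¹ x ≠ x := by
    intro x h1 h2 hfx
    exact hfpf x h1 h2 (by
      have := congrArg σ hfx
      simpa using this.symm)
  have hp' : (p:ℝ) < σ⁻¹ p := by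
    have := hinv hup
    simpa using this
  have := sign_up hinv hfpf' hp1 hp2 hp'
  intro x hx1 hx2
  have h2 := this x hx1 hx2
  have := h (Subtype.coe_lt_coe.1 h2)
  simpa using this

end Stmt13Aux
namespace Stmt13Aux

lemma inv_fix {h : IntervalMap} {e : ↥unitI} (hhe : h e = e) : h⁻¹ e = e := by
  have := congrArg (fun z => h⁻¹ z) hhe
  simpa using this.symm

lemma oph_lt {σ : IntervalMap} (hs : IsOPH σ) {x y : ↥unitI} (hxy : (x:ℝ) < y) :
    (σ x : ℝ) < σ y := by
  have := hs (Subtype.coe_lt_coe.1 hxy)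
  simpa using this

lemma gap_lemma {v : IntervalMap} (hv : IsOPH v) (hfin : (FixPts v).Finite)
    {q : ↥unitI} (hq0 : 0 < (q:ℝ)) (hq1 : (q:ℝ) < 1) (hq : v q ≠ q) :
    ∃ c d : ↥unitI, (c:ℝ) < d ∧ v c = c ∧ v d = d ∧
      (∀ x : ↥unitI, (c:ℝ) < x → (x:ℝ) < d → v x ≠ x) ∧ (c:ℝ) < q ∧ (q:ℝ) < d := by
  set S1 : Set ↥unitI := insert e0 {x | x ∈ FixPts v ∧ (x:ℝ) < q} with hS1
  have hS1fin : S1.Finite := Set.Finite.insert _ (hfin.subset (fun x hx => hx.1))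
  have hS1ne : S1.Nonempty := ⟨e0, Set.mem_insert _ _⟩
  obtain ⟨c, hcS, hcmax⟩ := Set.exists_max_image S1 (fun x => (x:ℝ)) hS1fin hS1ne
  set S2 : Set ↥unitI := insert e1 {x | x ∈ FixPts v ∧ (q:ℝ) < x} with hS2
  have hS2fin : S2.Finite := Set.Finite.insert _ (hfin.subset (fun x hx => hx.1))
  have hS2ne : S2.Nonempty := ⟨e1, Set.mem_insert _ _⟩
  obtain ⟨d, hdS, hdmin⟩ := Set.exists_min_image S2 (fun x => (x:ℝ)) hS2fin hS2ne
  have hcq : (c:ℝ) < q := by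
    rcases hcS with h' | h'
    · rw [h']; exact hq0
    · exact h'.2
  have hqd : (q:ℝ) < d := by
    rcases hdS with h' | h'
    · rw [h']; exact hq1
    · exact h'.2
  have hvc : v c = c := by
    rcases hcS with h' | h'
    · rw [h']; exact fix_e0 hv
    · exact h'.1.1
  have hvd : v d = d := by
    rcases hdS with h' | h'
    · rw [h']; exact fix_e1 hv
    · exact h'.1.1
  refine ⟨c, d, lt_trans hcq hqd, hvc, hvd, ?_, hcq, hqd⟩
  intro x hx1 hx2 hvx
  have hx0 : 0 < (x:ℝ) := lt_of_le_of_lt c.2.1 hx1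
  have hx1' : (x:ℝ) < 1 := lt_of_lt_of_le hx2 d.2.2
  have hxF : x ∈ FixPts v := ⟨hvx, hx0, hx1'⟩
  rcases lt_trichotomy ((x:ℝ)) q with h' | h' | h'
  · exact absurd (hcmax x (Set.mem_insert_of_mem _ ⟨hxF, h'⟩)) (not_le.2 hx1)
  · exact hq (by rw [← Subtype.ext h']; exact hvx)
  · exact absurd (hdmin x (Set.mem_insert_of_mem _ ⟨hxF, h'⟩)) (not_le.2 hx2)

lemma lemmaB (G : Subgroup IntervalMap) (hGh : HomeoSubgroup G)
    {f h : IntervalMap} (hfG : f ∈ G) (hhG : h ∈ G)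
    {c d : ↥unitI} (hcd : (c:ℝ) < d)
    (hfc : f c = c) (hfd : f d = d)
    (hfpf : ∀ x : ↥unitI, (c:ℝ) < x → (x:ℝ) < d → f x ≠ x)
    (hfinh : (FixPts h).Finite)
    {e : ↥unitI} (he1 : (c:ℝ) < e) (he2 : (e:ℝ) < d) (hhe : h e = e) :
    ∃ u ∈ G, ∃ w ∈ G, CrossedPair u w := by
  have hhm : IsOPH h := hGh h hhG
  have hfm : IsOPH f := hGh f hfG
  by_cases hc : h c = c
  · by_cases hd : h d = d
    · -- case 3
      set T : Set ↥unitI := {x | x ∈ FixPts h ∧ (c:ℝ) < x} with hT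
      have hTfin : T.Finite := hfinh.subset (fun x hx => hx.1)
      have heT : e ∈ T := ⟨⟨hhe, lt_of_le_of_lt c.2.1 he1, lt_of_lt_of_le he2 d.2.2⟩, he1⟩
      obtain ⟨d2, hd2T, hd2min⟩ := Set.exists_min_image T (fun x => (x:ℝ)) hTfin ⟨e, heT⟩
      have hd2e : (d2:ℝ) ≤ e := hd2min e heT
      have hcd2 : (c:ℝ) < d2 := hd2T.2
      have hd2d : (d2:ℝ) < d := lt_of_le_of_lt hd2e he2
      have hhd2 : h d2 = d2 := hd2T.1.1
      have hfpf2 : ∀ x : ↥unitI, (c:ℝ) < x → (x:ℝ) < d2 → h x ≠ x := by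
        intro x hx1 hx2 hhx
        have hxF : x ∈ FixPts h :=
          ⟨hhx, lt_of_le_of_lt c.2.1 hx1, lt_of_lt_of_le (lt_trans hx2 hd2d) d.2.2⟩
        exact absurd (hd2min x ⟨hxF, hx1⟩) (not_le.2 hx2)
      have hfd2 : f d2 ≠ d2 := hfpf d2 hcd2 hd2d
      rcases lt_trichotomy ((f d2 : ℝ)) d2 with h' | h' | h'
      · refine ⟨h, hhG, f, hfG, c, d2, hcd2, Or.inl ⟨hc, hhd2, hfpf2, Or.inr ⟨?_, h'⟩⟩⟩
        have := oph_lt hfm hcd2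
        rwa [hfc] at this
      · exact absurd (Subtype.ext h') hfd2
      · refine ⟨h, hhG, f⁻¹, G.inv_mem hfG, c, d2, hcd2, Or.inl ⟨hc, hhd2, hfpf2, Or.inr ⟨?_, ?_⟩⟩⟩
        · have := oph_lt (oph_inv hfm) hcd2
          rwa [inv_fix hfc] at this
        · have := oph_lt (oph_inv hfm) h'
          simpa using this
    · -- case 2 : h d ≠ d
      have hed : (e:ℝ) < (h d : ℝ) := by
        have := oph_lt hhm he2
        rwa [hhe] at this
      rcases lt_trichotomy ((h d : ℝ)) d with h' | h' | h'
      · exact ⟨f, hfG, h, hhG, c, d, hcd, Or.inl ⟨hfc, hfd, hfpf,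
          Or.inr ⟨lt_trans he1 hed, h'⟩⟩⟩
      · exact absurd (Subtype.ext h') hd
      · refine ⟨f, hfG, h⁻¹, G.inv_mem hhG, c, d, hcd, Or.inl ⟨hfc, hfd, hfpf,
          Or.inr ⟨?_, ?_⟩⟩⟩
        · have := oph_lt (oph_inv hhm) he2
          rw [inv_fix hhe] at this
          exact lt_trans he1 this
        · have := oph_lt (oph_inv hhm) h'
          simpa using this
  · -- case 1 : h c ≠ c
    have hce : (h c : ℝ) < e := by
      have := oph_lt hhm he1
      rwa [hhe] at this
    rcases lt_trichotomy ((h c : ℝ)) c with h' | h' | h'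
    · refine ⟨f, hfG, h⁻¹, G.inv_mem hhG, c, d, hcd, Or.inl ⟨hfc, hfd, hfpf,
        Or.inl ⟨?_, ?_⟩⟩⟩
      · have := oph_lt (oph_inv hhm) h'
        simpa using this
      · have h2 := oph_lt (oph_inv hhm) he1
        rw [inv_fix hhe] at h2
        exact lt_trans h2 he2
    · exact absurd (Subtype.ext h') hc
    · exact ⟨f, hfG, h, hhG, c, d, hcd, Or.inl ⟨hfc, hfd, hfpf,
        Or.inl ⟨h', lt_trans hce he2⟩⟩⟩

end Stmt13Aux
namespace Stmt13Aux

/-- pointwise order on the gap `(c,d)` -/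
def PLe (c d : ↥unitI) (v w : IntervalMap) : Prop :=
  ∀ x : ↥unitI, (c:ℝ) < x → (x:ℝ) < d → (v x : ℝ) ≤ ((w x : ℝ))

def PLt (c d : ↥unitI) (v w : IntervalMap) : Prop :=
  ∀ x : ↥unitI, (c:ℝ) < x → (x:ℝ) < d → (v x : ℝ) < ((w x : ℝ))

structure Ctx (G : Subgroup IntervalMap) (c d x₀ : ↥unitI) : Prop where
  homeo : HomeoSubgroup G
  fixc : ∀ v ∈ G, v c = c
  fixd : ∀ v ∈ G, v d = d
  fpf : ∀ v ∈ G, v ≠ 1 → ∀ x : ↥unitI, (c:ℝ) < x → (x:ℝ) < d → v x ≠ x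
  hx1 : (c:ℝ) < x₀
  hx2 : (x₀:ℝ) < d

variable {G : Subgroup IntervalMap} {c d x₀ : ↥unitI}

lemma Ctx.Jinv (hC : Ctx G c d x₀) {v : IntervalMap} (hv : v ∈ G) {x : ↥unitI}
    (h1 : (c:ℝ) < x) (h2 : (x:ℝ) < d) : (c:ℝ) < v x ∧ (v x : ℝ) < d := by
  constructor
  · have := oph_lt (hC.homeo v hv) h1
    rwa [hC.fixc v hv] at this
  · have := oph_lt (hC.homeo v hv) h2
    rwa [hC.fixd v hv] at this

lemma PLt.ple {v w : IntervalMap} (h : PLt c d v w) : PLe c d v w :=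
  fun x h1 h2 => (h x h1 h2).le

lemma Ctx.plt_irrefl (hC : Ctx G c d x₀) {v w : IntervalMap} (h1 : PLt c d v w)
    (h2 : PLe c d w v) : False := by
  have a1 := h1 x₀ hC.hx1 hC.hx2
  have a2 := h2 x₀ hC.hx1 hC.hx2
  linarith

lemma Ctx.trichotomy (hC : Ctx G c d x₀) {v w : IntervalMap} (hv : v ∈ G) (hw : w ∈ G) :
    PLt c d v w ∨ v = w ∨ PLt c d w v := by
  by_cases hvw : v = w
  · exact Or.inr (Or.inl hvw)
  have huG : w * v⁻¹ ∈ G := G.mul_mem hw (G.inv_mem hv)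
  have hu1 : w * v⁻¹ ≠ 1 := by
    intro h
    exact hvw (by
      have := congrArg (fun z => z * v) h
      simpa [mul_assoc] using this.symm)
  have hufpf := hC.fpf _ huG hu1
  have hux : ((w * v⁻¹) x₀ : ℝ) ≠ x₀ := by
    intro h
    exact hufpf x₀ hC.hx1 hC.hx2 (Subtype.ext h)
  have hmain : ∀ y : ↥unitI, (c:ℝ) < y → (y:ℝ) < d → (v⁻¹ (v y)) = y := by
    intro y _ _; simp
  rcases lt_or_gt_of_ne hux with hdn | hup
  · right; right
    have hall := sign_down (hC.homeo _ huG) hufpf hC.hx1 hC.hx2 hdn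
    intro y hy1 hy2
    obtain ⟨hvy1, hvy2⟩ := hC.Jinv hv hy1 hy2
    have := hall (v y) hvy1 hvy2
    simpa using this
  · left
    have hall := sign_up (hC.homeo _ huG) hufpf hC.hx1 hC.hx2 hup
    intro y hy1 hy2
    obtain ⟨hvy1, hvy2⟩ := hC.Jinv hv hy1 hy2
    have := hall (v y) hvy1 hvy2
    simpa using this

lemma Ctx.ple_mul (hC : Ctx G c d x₀) {v₁ w₁ v₂ w₂ : IntervalMap}
    (hw₁ : w₁ ∈ G) (hv₂ : v₂ ∈ G)
    (h1 : PLe c d v₁ w₁) (h2 : PLe c d v₂ w₂) : PLe c d (v₁ * v₂) (w₁ * w₂) := by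
  intro x hx1 hx2
  obtain ⟨ha, hb⟩ := hC.Jinv hv₂ hx1 hx2
  simp only [Equiv.Perm.mul_apply]
  calc (v₁ (v₂ x) : ℝ) ≤ w₁ (v₂ x) := h1 _ ha hb
    _ ≤ w₁ (w₂ x) := (hC.homeo w₁ hw₁).monotone (by
        apply Subtype.coe_le_coe.1
        exact_mod_cast h2 x hx1 hx2)

lemma Ctx.plt_mul_of_le_of_lt (hC : Ctx G c d x₀) {v₁ w₁ v₂ w₂ : IntervalMap}
    (hw₁ : w₁ ∈ G) (hv₂ : v₂ ∈ G)
    (h1 : PLe c d v₁ w₁) (h2 : PLt c d v₂ w₂) : PLt c d (v₁ * v₂) (w₁ * w₂) := by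
  intro x hx1 hx2
  obtain ⟨ha, hb⟩ := hC.Jinv hv₂ hx1 hx2
  simp only [Equiv.Perm.mul_apply]
  calc (v₁ (v₂ x) : ℝ) ≤ w₁ (v₂ x) := h1 _ ha hb
    _ < w₁ (w₂ x) := oph_lt (hC.homeo w₁ hw₁) (h2 x hx1 hx2)

lemma Ctx.plt_mul_of_lt_of_le (hC : Ctx G c d x₀) {v₁ w₁ v₂ w₂ : IntervalMap}
    (hw₁ : w₁ ∈ G) (hv₂ : v₂ ∈ G)
    (h1 : PLt c d v₁ w₁) (h2 : PLe c d v₂ w₂) : PLt c d (v₁ * v₂) (w₁ * w₂) := by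
  intro x hx1 hx2
  obtain ⟨ha, hb⟩ := hC.Jinv hv₂ hx1 hx2
  simp only [Equiv.Perm.mul_apply]
  calc (v₁ (v₂ x) : ℝ) < w₁ (v₂ x) := h1 _ ha hb
    _ ≤ w₁ (w₂ x) := (hC.homeo w₁ hw₁).monotone (by
        apply Subtype.coe_le_coe.1
        exact_mod_cast h2 x hx1 hx2)

lemma Ctx.plt_mul (hC : Ctx G c d x₀) {v₁ w₁ v₂ w₂ : IntervalMap}
    (hw₁ : w₁ ∈ G) (hv₂ : v₂ ∈ G)
    (h1 : PLt c d v₁ w₁) (h2 : PLt c d v₂ w₂) : PLt c d (v₁ * v₂) (w₁ * w₂) :=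
  hC.plt_mul_of_le_of_lt hw₁ hv₂ h1.ple h2

lemma Ctx.ple_inv (hC : Ctx G c d x₀) {v w : IntervalMap} (hv : v ∈ G) (hw : w ∈ G)
    (h : PLe c d v w) : PLe c d w⁻¹ v⁻¹ := by
  intro y hy1 hy2
  obtain ⟨ha, hb⟩ := hC.Jinv (G.inv_mem hw) hy1 hy2
  have h1 : (v (w⁻¹ y) : ℝ) ≤ y := by
    have := h (w⁻¹ y) ha hb
    simpa using this
  have := (oph_inv (hC.homeo v hv)).monotone (show v (w⁻¹ y) ≤ y by
    apply Subtype.coe_le_coe.1; exact_mod_cast h1)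
  simpa using this

lemma Ctx.plt_inv (hC : Ctx G c d x₀) {v w : IntervalMap} (hv : v ∈ G) (hw : w ∈ G)
    (h : PLt c d v w) : PLt c d w⁻¹ v⁻¹ := by
  intro y hy1 hy2
  obtain ⟨ha, hb⟩ := hC.Jinv (G.inv_mem hw) hy1 hy2
  have h1 : (v (w⁻¹ y) : ℝ) < y := by
    have := h (w⁻¹ y) ha hb
    simpa using this
  have := oph_lt (oph_inv (hC.homeo v hv)) h1
  simpa using this

/-- positivity on the gap -/
def Pos (c d : ↥unitI) (v : IntervalMap) : Prop := PLt c d 1 v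

lemma pos_iff {v : IntervalMap} : Pos c d v ↔
    ∀ x : ↥unitI, (c:ℝ) < x → (x:ℝ) < d → (x:ℝ) < v x := by
  constructor <;> intro h x h1 h2 <;> simpa using h x h1 h2

lemma Ctx.pos_pow (hC : Ctx G c d x₀) {v : IntervalMap} (hv : v ∈ G) (hp : Pos c d v) :
    ∀ n : ℕ, Pos c d (v ^ (n + 1)) := by
  intro n
  induction n with
  | zero => simpa using hp
  | succ k ih =>
    have := hC.plt_mul (G.pow_mem hv (k+1)) G.one_mem ih hp
    simpa [pow_succ, Pos] using this

end Stmt13Aux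
namespace Stmt13Aux

variable {G : Subgroup IntervalMap} {c d x₀ : ↥unitI}

lemma Ctx.arch (hC : Ctx G c d x₀) {u v : IntervalMap} (hu : u ∈ G) (hv : v ∈ G)
    (hup : Pos c d u) : ∃ n : ℕ, PLt c d v (u ^ n) := by
  have hpt : ∃ n : ℕ, (v x₀ : ℝ) < ((u ^ n) x₀ : ℝ) := by
    by_contra hcon
    push_neg at hcon
    set A : Set ℝ := Set.range (fun n : ℕ => ((u ^ n) x₀ : ℝ)) with hA
    have hbdd : BddAbove A := by
      refine ⟨(v x₀ : ℝ), ?_⟩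
      rintro t ⟨n, rfl⟩
      exact hcon n
    have hne : A.Nonempty := ⟨_, ⟨0, rfl⟩⟩
    set s := sSup A with hs
    have hx₀s : (x₀ : ℝ) ≤ s := by
      have : ((u ^ 0) x₀ : ℝ) ≤ s := le_csSup hbdd ⟨0, rfl⟩
      simpa using this
    have hsv : s ≤ (v x₀ : ℝ) := csSup_le hne (by rintro t ⟨n, rfl⟩; exact hcon n)
    obtain ⟨hv1, hv2⟩ := hC.Jinv hv hC.hx1 hC.hx2
    have hs1 : (c:ℝ) < s := lt_of_lt_of_le hC.hx1 hx₀s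
    have hs2 : s < (d:ℝ) := lt_of_le_of_lt hsv hv2
    have hsI : s ∈ unitI := ⟨le_trans c.2.1 hs1.le, le_trans hs2.le d.2.2⟩
    set S : ↥unitI := ⟨s, hsI⟩ with hS
    have hSup : (S:ℝ) < u S := (pos_iff.1 hup) S hs1 hs2
    have hinvS : (u⁻¹ S : ℝ) < S := by
      have := oph_lt (oph_inv (hC.homeo u hu)) hSup
      simpa using this
    obtain ⟨t, ⟨n, rfl⟩, hlt⟩ := exists_lt_of_lt_csSup hne hinvS
    have : (S:ℝ) < ((u ^ (n+1)) x₀ : ℝ) := by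
      have := oph_lt (hC.homeo u hu) hlt
      simp only [Equiv.Perm.coe_inv, Equiv.apply_symm_apply] at this
      calc (S:ℝ) = u (u⁻¹ S) := by simp
        _ < u ((u^n) x₀) := by
            exact oph_lt (hC.homeo u hu) hlt
        _ = ((u ^ (n+1)) x₀ : ℝ) := by
            rw [pow_succ']
            simp [Equiv.Perm.mul_apply]
    exact absurd (le_csSup hbdd ⟨n+1, rfl⟩) (not_le.2 this)
  obtain ⟨n, hn⟩ := hpt
  rcases hC.trichotomy hv (G.pow_mem hu n) with h' | h' | h'
  · exact ⟨n, h'⟩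
  · refine ⟨n + 1, ?_⟩
    rw [h']
    have := hC.plt_mul_of_le_of_lt (G.pow_mem hu n) G.one_mem
      (show PLe c d (u^n) (u^n) from fun x h1 h2 => le_refl _) hup
    simpa [pow_succ] using this
  · exact absurd (h' x₀ hC.hx1 hC.hx2) (not_lt.2 hn.le)

lemma Ctx.zpow_lt (hC : Ctx G c d x₀) {δ : IntervalMap} (hδ : δ ∈ G) (hp : Pos c d δ)
    {k l : ℤ} (hkl : k < l) : PLt c d (δ ^ k) (δ ^ l) := by
  have h1 : Pos c d (δ ^ ((l - k - 1).toNat + 1)) := hC.pos_pow hδ hp _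
  have h2 : ((l - k - 1).toNat : ℤ) + 1 = l - k := by omega
  have h3 : δ ^ (((l - k - 1).toNat : ℕ) + 1) = δ ^ (l - k) := by
    rw [← zpow_natCast]
    push_cast
    rw [h2]
  rw [h3] at h1
  have := hC.plt_mul_of_le_of_lt (G.zpow_mem hδ k) G.one_mem
    (fun x h1 h2 => le_refl _ : PLe c d (δ^k) (δ^k)) h1
  have heq : δ ^ k * δ ^ (l - k) = δ ^ l := by
    rw [← zpow_add]; ring_nf
  rw [mul_one, heq] at this
  exact this

lemma Ctx.sandwich (hC : Ctx G c d x₀) {δ a : IntervalMap} (hδ : δ ∈ G) (ha : a ∈ G)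
    (hp : Pos c d δ) : ∃ m : ℤ, PLe c d (δ ^ m) a ∧ PLt c d a (δ ^ (m + 1)) := by
  obtain ⟨N, hN⟩ := hC.arch hδ ha hp
  obtain ⟨M, hM⟩ := hC.arch hδ (G.inv_mem ha) hp
  have hlow : PLe c d (δ ^ (-(M:ℤ))) a := by
    have := hC.ple_inv (G.inv_mem ha) (G.pow_mem hδ M) hM.ple
    simpa [← zpow_natCast, ← zpow_neg] using this
  have hbdd : ∀ z : ℤ, PLe c d (δ ^ z) a → z ≤ (N:ℤ) := by
    intro z hz
    by_contra hcon
    push_neg at hcon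
    have h1 : PLt c d (δ ^ (N:ℤ)) (δ ^ z) := hC.zpow_lt hδ hp hcon
    have h2 := hz x₀ hC.hx1 hC.hx2
    have h3 := h1 x₀ hC.hx1 hC.hx2
    have h4 := hN x₀ hC.hx1 hC.hx2
    rw [show δ ^ (N:ℤ) = δ ^ N from zpow_natCast δ N] at h3
    linarith
  obtain ⟨m, hm, hmax⟩ := Int.exists_greatest_of_bdd ⟨(N:ℤ), hbdd⟩ ⟨-(M:ℤ), hlow⟩
  refine ⟨m, hm, ?_⟩
  rcases hC.trichotomy ha (G.zpow_mem hδ (m+1)) with h' | h' | h'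
  · exact h'
  · exfalso
    have : PLe c d (δ ^ (m+1)) a := by rw [h']; exact fun x h1 h2 => le_refl _
    exact absurd (hmax _ this) (by omega)
  · exfalso
    exact absurd (hmax _ h'.ple) (by omega)

end Stmt13Aux
namespace Stmt13Aux

variable {G : Subgroup IntervalMap} {c d x₀ : ↥unitI}

lemma Ctx.ple_refl (hC : Ctx G c d x₀) (v : IntervalMap) : PLe c d v v :=
  fun x _ _ => le_refl _

theorem Ctx.holder (hC : Ctx G c d x₀) {f g : IntervalMap} (hf : f ∈ G) (hg : g ∈ G)
    (hfg : f * g ≠ g * f) : False := by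
  -- Step 1: a commutator that is positive on the gap
  have hstep1 : ∃ a b : IntervalMap, a ∈ G ∧ b ∈ G ∧ Pos c d (a⁻¹ * b⁻¹ * a * b) := by
    have hc1G : f⁻¹ * g⁻¹ * f * g ∈ G :=
      G.mul_mem (G.mul_mem (G.mul_mem (G.inv_mem hf) (G.inv_mem hg)) hf) hg
    have hc1ne : f⁻¹ * g⁻¹ * f * g ≠ 1 := by
      intro h
      apply hfg
      have h3 := congrArg (fun z => g * f * z) h
      simp only [mul_one] at h3
      rw [← h3]; group
    rcases hC.trichotomy G.one_mem hc1G with h' | h' | h'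
    · exact ⟨f, g, hf, hg, h'⟩
    · exact absurd h'.symm hc1ne
    · refine ⟨g, f, hg, hf, ?_⟩
      have h2 := hC.plt_inv hc1G G.one_mem h'
      have he : (f⁻¹ * g⁻¹ * f * g)⁻¹ = g⁻¹ * f⁻¹ * g * f := by group
      rw [inv_one, he] at h2
      exact h2
  obtain ⟨a, b, haG, hbG, hγ⟩ := hstep1
  set γ := a⁻¹ * b⁻¹ * a * b with hγdef
  have hγG : γ ∈ G :=
    G.mul_mem (G.mul_mem (G.mul_mem (G.inv_mem haG) (G.inv_mem hbG)) haG) hbG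
  by_cases hmin : ∃ s ∈ G, Pos c d s ∧ ∀ t ∈ G, Pos c d t → PLe c d s t
  · -- cyclic case
    obtain ⟨s, hsG, hsp, hsm⟩ := hmin
    have key : ∀ v ∈ G, ∃ k : ℤ, v = s ^ k := by
      intro v hv
      obtain ⟨m, h1, h2⟩ := hC.sandwich hsG hv hsp
      set t := s ^ (-m) * v with ht
      have htG : t ∈ G := G.mul_mem (G.zpow_mem hsG (-m)) hv
      have hle1 : PLe c d 1 t := by
        have := hC.ple_mul (G.zpow_mem hsG (-m)) (G.zpow_mem hsG m)
          (hC.ple_refl (s ^ (-m))) h1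
        have he : s ^ (-m) * s ^ m = 1 := by group
        rwa [he] at this
      have hlt2 : PLt c d t s := by
        have := hC.plt_mul_of_le_of_lt (G.zpow_mem hsG (-m)) hv
          (hC.ple_refl (s ^ (-m))) h2
        have he : s ^ (-m) * s ^ (m + 1) = s := by group
        rwa [he] at this
      by_cases ht1 : t = 1
      · refine ⟨m, ?_⟩
        rw [ht, zpow_neg] at ht1
        exact (inv_mul_eq_one.1 ht1).symm
      · exfalso
        rcases hC.trichotomy G.one_mem htG with h' | h' | h'
        · exact hC.plt_irrefl hlt2 (hsm t htG h')
        · exact ht1 h'.symm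
        · exact hC.plt_irrefl h' hle1
    obtain ⟨p, hp⟩ := key a haG
    obtain ⟨q, hq⟩ := key b hbG
    have hab : a * b = b * a := by
      rw [hp, hq, ← zpow_add, ← zpow_add, add_comm]
    have hγ1 : γ = 1 := by
      rw [hγdef, mul_assoc (a⁻¹ * b⁻¹), hab]
      group
    have := hγ x₀ hC.hx1 hC.hx2
    rw [hγ1] at this
    simp at this
  · -- no minimal positive element : Hölder's argument
    push_neg at hmin
    obtain ⟨ε, hεG, hεp, hnle⟩ := hmin γ hγG hγ
    have hεγ : PLt c d ε γ := by
      rcases hC.trichotomy hεG hγG with h' | h' | h'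
      · exact h'
      · exact absurd (h' ▸ hC.ple_refl γ) hnle
      · exact absurd h'.ple hnle
    have hmemδ2 : ε⁻¹ * γ ∈ G := G.mul_mem (G.inv_mem hεG) hγG
    have hδ : ∃ δ : IntervalMap, δ ∈ G ∧ Pos c d δ ∧ PLe c d (δ * δ) γ := by
      rcases hC.trichotomy hεG hmemδ2 with h' | h' | h'
      · refine ⟨ε, hεG, hεp, ?_⟩
        have := hC.ple_mul hεG hεG (hC.ple_refl ε) h'.ple
        rwa [mul_inv_cancel_left] at this
      · refine ⟨ε, hεG, hεp, ?_⟩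
        have h2 : PLe c d ε (ε⁻¹ * γ) := by rw [← h']; exact hC.ple_refl ε
        have := hC.ple_mul hεG hεG (hC.ple_refl ε) h2
        rwa [mul_inv_cancel_left] at this
      · refine ⟨ε⁻¹ * γ, hmemδ2, ?_, ?_⟩
        · have := hC.plt_mul_of_le_of_lt (G.inv_mem hεG) hεG
            (hC.ple_refl ε⁻¹) hεγ
          rwa [inv_mul_cancel] at this
        · have := hC.plt_mul_of_lt_of_le hεG hmemδ2 h' (hC.ple_refl (ε⁻¹ * γ))
          rw [mul_inv_cancel_left] at this
          exact this.ple
    obtain ⟨δ, hδG, hδp, hδ2⟩ := hδ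
    obtain ⟨m, ham, ham'⟩ := hC.sandwich hδG haG hδp
    obtain ⟨n, hbn, hbn'⟩ := hC.sandwich hδG hbG hδp
    have L1 : PLe c d a⁻¹ (δ ^ m)⁻¹ := hC.ple_inv (G.zpow_mem hδG m) haG ham
    have L2 : PLe c d b⁻¹ (δ ^ n)⁻¹ := hC.ple_inv (G.zpow_mem hδG n) hbG hbn
    have L3 : PLe c d (a⁻¹ * b⁻¹) ((δ ^ m)⁻¹ * (δ ^ n)⁻¹) :=
      hC.ple_mul (G.inv_mem (G.zpow_mem hδG m)) (G.inv_mem hbG) L1 L2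
    have L4 : PLt c d (a⁻¹ * b⁻¹ * a) ((δ ^ m)⁻¹ * (δ ^ n)⁻¹ * δ ^ (m + 1)) :=
      hC.plt_mul_of_le_of_lt
        (G.mul_mem (G.inv_mem (G.zpow_mem hδG m)) (G.inv_mem (G.zpow_mem hδG n))) haG
        L3 ham'
    have L5 : PLt c d γ ((δ ^ m)⁻¹ * (δ ^ n)⁻¹ * δ ^ (m + 1) * δ ^ (n + 1)) :=
      hC.plt_mul_of_le_of_lt
        (G.mul_mem (G.mul_mem (G.inv_mem (G.zpow_mem hδG m))
          (G.inv_mem (G.zpow_mem hδG n))) (G.zpow_mem hδG (m+1))) hbG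
        L4.ple hbn'
    have hR : (δ ^ m)⁻¹ * (δ ^ n)⁻¹ * δ ^ (m + 1) * δ ^ (n + 1) = δ * δ := by group; rw [zpow_two]
    rw [hR] at L5
    exact hC.plt_irrefl L5 hδ2

end Stmt13Aux
namespace Stmt13Aux

theorem exists_crossed (G : Subgroup IntervalMap) (hGhomeo : HomeoSubgroup G)
    (hGfix : FinFix G) (hGnab : ¬ ∀ a ∈ G, ∀ b ∈ G, a * b = b * a) :
    ∃ f ∈ G, ∃ g ∈ G, CrossedPair f g := by
  by_contra hno
  have hnc : ∀ u ∈ G, ∀ v ∈ G, ¬ CrossedPair u v := by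
    intro u hu v hv hcp
    exact hno ⟨u, hu, v, hv, hcp⟩
  push_neg at hGnab
  obtain ⟨f, hf, g, hg, hfg⟩ := hGnab
  set w := f⁻¹ * g⁻¹ * f * g with hwdef
  have hwG : w ∈ G :=
    G.mul_mem (G.mul_mem (G.mul_mem (G.inv_mem hf) (G.inv_mem hg)) hf) hg
  have hwne : w ≠ 1 := by
    intro h
    apply hfg
    have h3 := congrArg (fun z => g * f * z) h
    simp only [mul_one] at h3
    rw [← h3, hwdef]; group
  have hwm : IsOPH w := hGhomeo w hwG
  have hq : ∃ q : ↥unitI, w q ≠ q := by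
    by_contra h
    push_neg at h
    exact hwne (Equiv.ext h)
  obtain ⟨q, hq⟩ := hq
  have hq0 : 0 < (q:ℝ) := by
    rcases lt_or_eq_of_le q.2.1 with h' | h'
    · exact h'
    · exfalso
      have : q = e0 := Subtype.ext h'.symm
      rw [this] at hq
      exact hq (fix_e0 hwm)
  have hq1 : (q:ℝ) < 1 := by
    rcases lt_or_eq_of_le q.2.2 with h' | h'
    · exact h'
    · exfalso
      have : q = e1 := Subtype.ext h'
      rw [this] at hq
      exact hq (fix_e1 hwm)
  obtain ⟨c, d, hcd, hwc, hwd, hwfpf, hcq, hqd⟩ :=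
    gap_lemma hwm (hGfix w hwG hwne) hq0 hq1 hq
  have hfpfall : ∀ v ∈ G, v ≠ 1 → ∀ x : ↥unitI, (c:ℝ) < x → (x:ℝ) < d → v x ≠ x := by
    intro v hv hv1 x h1 h2 hvx
    obtain ⟨u, hu, v', hv', hcp⟩ :=
      lemmaB G hGhomeo hwG hv hcd hwc hwd hwfpf (hGfix v hv hv1) h1 h2 hvx
    exact hnc u hu v' hv' hcp
  have hfixc : ∀ v ∈ G, v c = c := by
    intro v hv
    by_contra hvc
    have hvm : IsOPH v := hGhomeo v hv
    have hv1 : v ≠ 1 := by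
      rintro rfl
      simp at hvc
    have hc0 : 0 < (c:ℝ) := by
      rcases lt_or_eq_of_le c.2.1 with h' | h'
      · exact h'
      · exfalso
        have : c = e0 := Subtype.ext h'.symm
        rw [this] at hvc
        exact hvc (fix_e0 hvm)
    have hc1 : (c:ℝ) < 1 := lt_of_lt_of_le hcd d.2.2
    obtain ⟨c', d', hcd', hvc', hvd', hvfpf', h1', h2'⟩ :=
      gap_lemma hvm (hGfix v hv hv1) hc0 hc1 hvc
    obtain ⟨u, hu, v'', hv'', hcp⟩ :=
      lemmaB G hGhomeo hv hwG hcd' hvc' hvd' hvfpf' (hGfix w hwG hwne) h1' h2' hwc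
    exact hnc u hu v'' hv'' hcp
  have hfixd : ∀ v ∈ G, v d = d := by
    intro v hv
    by_contra hvd'
    have hvm : IsOPH v := hGhomeo v hv
    have hv1 : v ≠ 1 := by
      rintro rfl
      simp at hvd'
    have hd1 : (d:ℝ) < 1 := by
      rcases lt_or_eq_of_le d.2.2 with h' | h'
      · exact h'
      · exfalso
        have : d = e1 := Subtype.ext h'
        rw [this] at hvd'
        exact hvd' (fix_e1 hvm)
    have hd0 : 0 < (d:ℝ) := lt_of_le_of_lt c.2.1 hcd
    obtain ⟨c', d', hcd', hvc', hvd'', hvfpf', h1', h2'⟩ :=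
      gap_lemma hvm (hGfix v hv hv1) hd0 hd1 hvd'
    obtain ⟨u, hu, v'', hv'', hcp⟩ :=
      lemmaB G hGhomeo hv hwG hcd' hvc' hvd'' hvfpf' (hGfix w hwG hwne) h1' h2' hwd
    exact hnc u hu v'' hv'' hcp
  exact (Ctx.mk hGhomeo hfixc hfixd hfpfall hcq hqd : Ctx G c d q).holder hf hg hfg

end Stmt13Aux
namespace Stmt13Aux

lemma pingpong {φ ψ : IntervalMap} {U V : Set ↥unitI}
    (hdisj : ∀ x, x ∈ U → x ∉ V) {p : ↥unitI} (hp : p ∈ U)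
    (hφ : ∀ x, x ∈ U ∪ V → φ x ∈ U ∧ φ x ≠ p)
    (hψ : ∀ x, x ∈ U ∪ V → ψ x ∈ V) :
    FreeSemigroupPair φ ψ := by
  set e : Bool → IntervalMap := fun x => if x then φ else ψ with he
  set L := (FreeSemigroup.lift e : FreeSemigroup Bool →ₙ* IntervalMap) with hL
  have lift_nil : ∀ h : Bool, L ⟨h, []⟩ = e h := fun h => FreeSemigroup.lift_of e h
  have lift_cons : ∀ (h a : Bool) (t : List Bool), L ⟨h, a::t⟩ = e h * L ⟨a, t⟩ := by
    intro h a t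
    have h1 : (⟨h, a::t⟩ : FreeSemigroup Bool) = FreeSemigroup.of h * ⟨a, t⟩ := rfl
    rw [h1, map_mul, FreeSemigroup.lift_of]
  have estep : ∀ (h : Bool) (x : ↥unitI), x ∈ U ∪ V →
      (e h) x ∈ U ∪ V ∧ (h = true → (e h) x ∈ U ∧ (e h) x ≠ p) ∧
        (h = false → (e h) x ∈ V) := by
    intro h x hx
    cases h with
    | true =>
      have := hφ x hx
      exact ⟨Or.inl this.1, fun _ => by simpa [he] using this, fun hc => by simp at hc⟩
    | false =>
      have := hψ x hx
      exact ⟨Or.inr this, fun hc => by simp at hc, fun _ => by simpa [he] using this⟩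
  have inv : ∀ (t : List Bool) (h : Bool) (x : ↥unitI), x ∈ U ∪ V →
      (L ⟨h, t⟩) x ∈ U ∪ V := by
    intro t
    induction t with
    | nil =>
      intro h x hx
      rw [lift_nil]
      exact (estep h x hx).1
    | cons a t ih =>
      intro h x hx
      rw [lift_cons]
      simp only [Equiv.Perm.mul_apply]
      exact (estep h _ (ih a x hx)).1
  have valT : ∀ t : List Bool, (L ⟨true, t⟩) p ∈ U ∧ (L ⟨true, t⟩) p ≠ p := by
    intro t
    cases t with
    | nil =>
      rw [lift_nil]
      exact (estep true p (Or.inl hp)).2.1 rfl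
    | cons a t =>
      rw [lift_cons]
      simp only [Equiv.Perm.mul_apply]
      exact (estep true _ (inv t a p (Or.inl hp))).2.1 rfl
  have valF : ∀ t : List Bool, (L ⟨false, t⟩) p ∈ V := by
    intro t
    cases t with
    | nil =>
      rw [lift_nil]
      exact (estep false p (Or.inl hp)).2.2 rfl
    | cons a t =>
      rw [lift_cons]
      simp only [Equiv.Perm.mul_apply]
      exact (estep false _ (inv t a p (Or.inl hp))).2.2 rfl
  have wne : ∀ (h : Bool) (t : List Bool), (L ⟨h, t⟩) p ≠ p := by
    intro h t
    cases h with
    | true => exact (valT t).2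
    | false =>
      intro hc
      exact hdisj p hp (hc ▸ valF t)
  have heads : ∀ (h₁ h₂ : Bool) (t₁ t₂ : List Bool),
      L ⟨h₁, t₁⟩ = L ⟨h₂, t₂⟩ → h₁ = h₂ := by
    intro h₁ h₂ t₁ t₂ heq
    cases h₁ <;> cases h₂
    · rfl
    · exfalso
      have h1 := valF t₁
      have h2 := (valT t₂).1
      rw [heq] at h1
      exact hdisj _ h2 h1
    · exfalso
      have h1 := (valT t₁).1
      have h2 := valF t₂
      rw [heq] at h1
      exact hdisj _ h1 h2
    · rfl
  have key : ∀ (t₁ : List Bool) (h₁ h₂ : Bool) (t₂ : List Bool),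
      L ⟨h₁, t₁⟩ = L ⟨h₂, t₂⟩ → h₁ = h₂ ∧ t₁ = t₂ := by
    intro t₁
    induction t₁ with
    | nil =>
      intro h₁ h₂ t₂ heq
      have hh := heads _ _ _ _ heq
      refine ⟨hh, ?_⟩
      cases t₂ with
      | nil => rfl
      | cons b t' =>
        exfalso
        rw [← hh, lift_nil, lift_cons] at heq
        have : L ⟨b, t'⟩ = 1 := by
          have := congrArg (fun z => (e h₁)⁻¹ * z) heq
          simpa using this.symm
        have hval := wne b t'
        rw [this] at hval
        simp at hval
    | cons a t ih =>
      intro h₁ h₂ t₂ heq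
      have hh := heads _ _ _ _ heq
      refine ⟨hh, ?_⟩
      cases t₂ with
      | nil =>
        exfalso
        rw [← hh, lift_nil, lift_cons] at heq
        have : L ⟨a, t⟩ = 1 := by
          have := congrArg (fun z => (e h₁)⁻¹ * z) heq
          simpa using this
        have hval := wne a t
        rw [this] at hval
        simp at hval
      | cons b t' =>
        rw [← hh, lift_cons, lift_cons] at heq
        have heq' : L ⟨a, t⟩ = L ⟨b, t'⟩ := mul_left_cancel heq
        obtain ⟨e1, e2⟩ := ih a b t' heq'
        rw [e1, e2]
  intro w₁ w₂ heq
  obtain ⟨h₁, t₁⟩ := w₁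
  obtain ⟨h₂, t₂⟩ := w₂
  obtain ⟨e1, e2⟩ := key t₁ h₁ h₂ t₂ heq
  rw [e1, e2]

end Stmt13Aux
namespace Stmt13Aux

lemma oph_pow {σ : IntervalMap} (h : IsOPH σ) (n : ℕ) : IsOPH (σ ^ n) := by
  induction n with
  | zero => intro x y hxy; simpa using Subtype.coe_lt_coe.2 hxy
  | succ k ih =>
    intro x y hxy
    have h1 : σ x < σ y := Subtype.coe_lt_coe.1 (by exact_mod_cast h hxy)
    have := ih h1
    simpa [pow_succ, Equiv.Perm.mul_apply] using this

lemma pow_fix {σ : IntervalMap} {a : ↥unitI} (h : σ a = a) (n : ℕ) : (σ ^ n) a = a := by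
  induction n with
  | zero => simp
  | succ k ih => rw [pow_succ, Equiv.Perm.mul_apply, h, ih]

lemma lt_of_oph_lt {σ : IntervalMap} (h : IsOPH σ) {x y : ↥unitI}
    (hxy : (σ x : ℝ) < σ y) : (x:ℝ) < y := by
  by_contra hc
  push_neg at hc
  have := h.monotone (Subtype.coe_le_coe.1 (by exact_mod_cast hc))
  exact absurd hxy (not_lt.2 this)

lemma iter_sup {F : IntervalMap} (hm : IsOPH F) {a b z : ↥unitI}
    (hFb : F b = b)
    (hpos : ∀ x : ↥unitI, (a:ℝ) < x → (x:ℝ) < b → (x:ℝ) < F x)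
    (hz1 : (a:ℝ) < z) (hz2 : (z:ℝ) < b) {t : ℝ} (ht : t < (b:ℝ)) :
    ∃ N : ℕ, t < ((F ^ N) z : ℝ) := by
  by_contra hcon
  push_neg at hcon
  set A : Set ℝ := Set.range (fun n : ℕ => (((F ^ n) z : ↥unitI) : ℝ)) with hA
  have hbdd : BddAbove A := ⟨t, by rintro y ⟨n, rfl⟩; exact hcon n⟩
  have hne : A.Nonempty := ⟨_, ⟨0, rfl⟩⟩
  set s := sSup A with hs
  have hzs : (z:ℝ) ≤ s := by
    have : (((F ^ 0) z : ↥unitI) : ℝ) ≤ s := le_csSup hbdd ⟨0, rfl⟩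
    simpa using this
  have hst : s ≤ t := csSup_le hne (by rintro y ⟨n, rfl⟩; exact hcon n)
  have hs1 : (a:ℝ) < s := lt_of_lt_of_le hz1 hzs
  have hs2 : s < (b:ℝ) := lt_of_le_of_lt hst ht
  have hsI : s ∈ unitI := ⟨le_trans a.2.1 hs1.le, le_trans hs2.le b.2.2⟩
  set S : ↥unitI := ⟨s, hsI⟩ with hS
  have hSup : (S:ℝ) < F S := hpos S hs1 hs2
  have hinvS : (F⁻¹ S : ℝ) < S := by
    have := oph_lt (oph_inv hm) hSup
    simpa using this
  obtain ⟨y, ⟨n, rfl⟩, hlt⟩ := exists_lt_of_lt_csSup hne hinvS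
  have : (S:ℝ) < ((F ^ (n+1)) z : ℝ) := by
    calc (S:ℝ) = F (F⁻¹ S) := by simp
      _ < F ((F ^ n) z) := oph_lt hm hlt
      _ = ((F ^ (n+1)) z : ℝ) := by rw [pow_succ']; simp [Equiv.Perm.mul_apply]
  exact absurd (le_csSup hbdd ⟨n+1, rfl⟩) (not_le.2 this)

lemma iter_inf {F : IntervalMap} (hm : IsOPH F) {a b z : ↥unitI}
    (hFa : F a = a)
    (hneg : ∀ x : ↥unitI, (a:ℝ) < x → (x:ℝ) < b → (F x:ℝ) < x)
    (hz1 : (a:ℝ) < z) (hz2 : (z:ℝ) < b) {t : ℝ} (ht : (a:ℝ) < t) :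
    ∃ N : ℕ, ((F ^ N) z : ℝ) < t := by
  by_contra hcon
  push_neg at hcon
  set A : Set ℝ := Set.range (fun n : ℕ => (((F ^ n) z : ↥unitI) : ℝ)) with hA
  have hbdd : BddBelow A := ⟨t, by rintro y ⟨n, rfl⟩; exact hcon n⟩
  have hne : A.Nonempty := ⟨_, ⟨0, rfl⟩⟩
  set s := sInf A with hs
  have hzs : s ≤ (z:ℝ) := by
    have : s ≤ (((F ^ 0) z : ↥unitI) : ℝ) := csInf_le hbdd ⟨0, rfl⟩
    simpa using this
  have hst : t ≤ s := le_csInf hne (by rintro y ⟨n, rfl⟩; exact hcon n)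
  have hs1 : (a:ℝ) < s := lt_of_lt_of_le ht hst
  have hs2 : s < (b:ℝ) := lt_of_le_of_lt hzs hz2
  have hsI : s ∈ unitI := ⟨le_trans a.2.1 hs1.le, le_trans hs2.le b.2.2⟩
  set S : ↥unitI := ⟨s, hsI⟩ with hS
  have hSdn : (F S : ℝ) < S := hneg S hs1 hs2
  have hinvS : (S:ℝ) < F⁻¹ S := by
    have := oph_lt (oph_inv hm) hSdn
    simpa using this
  obtain ⟨y, ⟨n, rfl⟩, hlt⟩ := exists_lt_of_csInf_lt hne hinvS
  have : ((F ^ (n+1)) z : ℝ) < S := by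
    calc ((F ^ (n+1)) z : ℝ) = F ((F ^ n) z) := by rw [pow_succ']; simp [Equiv.Perm.mul_apply]
      _ < F (F⁻¹ S) := oph_lt hm hlt
      _ = (S : ℝ) := by simp
  exact absurd (csInf_le hbdd ⟨n+1, rfl⟩) (not_le.2 this)

end Stmt13Aux
namespace Stmt13Aux

lemma get_sign (G : Subgroup IntervalMap) (hGh : HomeoSubgroup G)
    {F : IntervalMap} (hF : F ∈ G) {a b : ↥unitI} (hab : (a:ℝ) < b)
    (hFa : F a = a) (hFb : F b = b)
    (hfpf : ∀ x : ↥unitI, (a:ℝ) < x → (x:ℝ) < b → F x ≠ x) :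
    (∃ f' : IntervalMap, f' ∈ G ∧ IsOPH f' ∧ f' a = a ∧ f' b = b ∧
      ∀ x : ↥unitI, (a:ℝ) < x → (x:ℝ) < b → (f' x : ℝ) < x) ∧
    (∃ f' : IntervalMap, f' ∈ G ∧ IsOPH f' ∧ f' a = a ∧ f' b = b ∧
      ∀ x : ↥unitI, (a:ℝ) < x → (x:ℝ) < b → (x:ℝ) < f' x) := by
  have hFm := hGh F hF
  have hmidI : ((a:ℝ)+(b:ℝ))/2 ∈ unitI := by
    constructor
    · have := a.2.1; have := b.2.1; linarith
    · have := a.2.2; have := b.2.2; linarith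
  set mid : ↥unitI := ⟨((a:ℝ)+(b:ℝ))/2, hmidI⟩ with hmid
  have hmid1 : (a:ℝ) < mid := by simp [hmid]; linarith
  have hmid2 : (mid:ℝ) < b := by simp [hmid]; linarith
  have hne : (F mid : ℝ) ≠ mid := fun h => hfpf mid hmid1 hmid2 (Subtype.ext h)
  have hinvneg : ∀ x : ↥unitI, (a:ℝ) < x → (x:ℝ) < b → (x:ℝ) < F x →
      (F⁻¹ x : ℝ) < x := by
    intro x _ _ hx
    have := oph_lt (oph_inv hFm) hx
    simpa using this
  have hinvpos : ∀ x : ↥unitI, (a:ℝ) < x → (x:ℝ) < b → (F x:ℝ) < x →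
      (x:ℝ) < F⁻¹ x := by
    intro x _ _ hx
    have := oph_lt (oph_inv hFm) hx
    simpa using this
  rcases lt_or_gt_of_ne hne with hdn | hup
  · have hall := sign_down hFm hfpf hmid1 hmid2 hdn
    refine ⟨⟨F, hF, hFm, hFa, hFb, hall⟩,
      ⟨F⁻¹, G.inv_mem hF, oph_inv hFm, inv_fix hFa, inv_fix hFb, ?_⟩⟩
    intro x h1 h2
    exact hinvpos x h1 h2 (hall x h1 h2)
  · have hall := sign_up hFm hfpf hmid1 hmid2 hup
    refine ⟨⟨F⁻¹, G.inv_mem hF, oph_inv hFm, inv_fix hFa, inv_fix hFb, ?_⟩,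
      ⟨F, hF, hFm, hFa, hFb, hall⟩⟩
    intro x h1 h2
    exact hinvneg x h1 h2 (hall x h1 h2)

lemma freepair_case1 (G : Subgroup IntervalMap) (hGh : HomeoSubgroup G)
    {F g : IntervalMap} (hF : F ∈ G) (hg : g ∈ G) {a b : ↥unitI} (hab : (a:ℝ) < b)
    (hFa : F a = a) (hFb : F b = b)
    (hfpf : ∀ x : ↥unitI, (a:ℝ) < x → (x:ℝ) < b → F x ≠ x)
    (hga1 : (a:ℝ) < g a) (hga2 : (g a : ℝ) < b) :
    ∃ u ∈ G, ∃ v ∈ G, FreeSemigroupPair u v := by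
  have hgm := hGh g hg
  obtain ⟨⟨f', hf'G, hf'm, hf'a, hf'b, hneg⟩, -⟩ :=
    get_sign G hGh hF hab hFa hFb hfpf
  set ca : ℝ := (g a : ℝ) with hca
  set c1 : ℝ := ((a:ℝ) + ca)/2 with hc1
  set c2 : ℝ := (ca + (b:ℝ))/2 with hc2
  have hac1 : (a:ℝ) < c1 := by rw [hc1]; linarith
  have hc1ca : c1 < ca := by rw [hc1]; linarith
  have hcac2 : ca < c2 := by rw [hc2]; linarith
  have hc2b : c2 < (b:ℝ) := by rw [hc2]; linarith
  have hc2I : c2 ∈ unitI :=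
    ⟨le_trans a.2.1 (by linarith), le_trans (le_of_lt hc2b) b.2.2⟩
  set cc2 : ↥unitI := ⟨c2, hc2I⟩ with hcc2
  have hginv2a : (a:ℝ) < (g⁻¹ cc2 : ℝ) := by
    apply lt_of_oph_lt hgm
    rw [Equiv.Perm.coe_inv, Equiv.apply_symm_apply]
    show ca < (c2:ℝ)
    linarith
  set a2 : ℝ := min ((g⁻¹ cc2 : ℝ)) (((a:ℝ) + c1)/2) with ha2
  have ha2a : (a:ℝ) < a2 := lt_min hginv2a (by linarith)
  have ha2c1 : a2 < c1 := lt_of_le_of_lt (min_le_right _ _) (by linarith)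
  have ha2g : a2 ≤ (g⁻¹ cc2 : ℝ) := min_le_left _ _
  obtain ⟨N, hN⟩ := iter_inf hf'm hf'a hneg (z := cc2)
    (show (a:ℝ) < ((cc2:↥unitI):ℝ) by show (a:ℝ) < c2; linarith)
    (show ((cc2:↥unitI):ℝ) < b from hc2b) ha2a
  set U : Set ↥unitI := {x | c1 < (x:ℝ) ∧ (x:ℝ) < c2} with hU
  set V : Set ↥unitI := {x | (a:ℝ) < x ∧ (x:ℝ) < a2} with hV
  have hpI : (c1 + ca)/2 ∈ unitI :=
    ⟨le_trans a.2.1 (by linarith), le_trans (by linarith : (c1+ca)/2 ≤ (b:ℝ)) b.2.2⟩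
  set p : ↥unitI := ⟨(c1 + ca)/2, hpI⟩ with hp'
  have hpc1 : c1 < (p:ℝ) := by simp [hp']; linarith
  have hpca : (p:ℝ) < ca := by simp [hp']; linarith
  have hpU : p ∈ U := ⟨hpc1, lt_trans hpca hcac2⟩
  have hdisj : ∀ x : ↥unitI, x ∈ U → x ∉ V := by
    intro x hx hx'
    have := hx.1
    have := hx'.2
    linarith
  have hbounds : ∀ x : ↥unitI, x ∈ U ∪ V → (a:ℝ) < x ∧ (x:ℝ) < c2 := by
    intro x hx
    rcases hx with hx | hx
    · exact ⟨lt_trans hac1 hx.1, hx.2⟩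
    · exact ⟨hx.1, by have := hx.2; linarith⟩
  have hψval : ∀ x : ↥unitI, x ∈ U ∪ V → (a:ℝ) < ((f'^N) x : ℝ) ∧ ((f'^N) x : ℝ) < a2 := by
    intro x hx
    obtain ⟨h1, h2⟩ := hbounds x hx
    constructor
    · have := oph_lt (oph_pow hf'm N) h1
      rwa [pow_fix hf'a N] at this
    · calc ((f'^N) x : ℝ) < (f'^N) cc2 := oph_lt (oph_pow hf'm N) h2
        _ < a2 := hN
  refine ⟨g * f'^N, G.mul_mem hg (G.pow_mem hf'G N), f'^N, G.pow_mem hf'G N,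
    pingpong hdisj hpU ?_ ?_⟩
  · intro x hx
    obtain ⟨h1, h2⟩ := hψval x hx
    simp only [Equiv.Perm.mul_apply]
    have hlow : ca < (g ((f'^N) x) : ℝ) := oph_lt hgm h1
    have hhigh : (g ((f'^N) x) : ℝ) < c2 := by
      have := oph_lt hgm (lt_of_lt_of_le h2 ha2g)
      rwa [Equiv.Perm.coe_inv, Equiv.apply_symm_apply] at this
    refine ⟨⟨lt_trans hc1ca hlow, hhigh⟩, ?_⟩
    intro hc
    have := congrArg (fun z : ↥unitI => (z:ℝ)) hc
    rw [this] at hlow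
    linarith
  · intro x hx
    exact hψval x hx

lemma freepair_case2 (G : Subgroup IntervalMap) (hGh : HomeoSubgroup G)
    {F g : IntervalMap} (hF : F ∈ G) (hg : g ∈ G) {a b : ↥unitI} (hab : (a:ℝ) < b)
    (hFa : F a = a) (hFb : F b = b)
    (hfpf : ∀ x : ↥unitI, (a:ℝ) < x → (x:ℝ) < b → F x ≠ x)
    (hgb1 : (a:ℝ) < g b) (hgb2 : (g b : ℝ) < b) :
    ∃ u ∈ G, ∃ v ∈ G, FreeSemigroupPair u v := by
  have hgm := hGh g hg
  obtain ⟨-, ⟨f', hf'G, hf'm, hf'a, hf'b, hpos⟩⟩ :=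
    get_sign G hGh hF hab hFa hFb hfpf
  set ca : ℝ := (g b : ℝ) with hca
  set c1 : ℝ := ((a:ℝ) + ca)/2 with hc1
  set c2 : ℝ := (ca + (b:ℝ))/2 with hc2
  have hac1 : (a:ℝ) < c1 := by rw [hc1]; linarith
  have hc1ca : c1 < ca := by rw [hc1]; linarith
  have hcac2 : ca < c2 := by rw [hc2]; linarith
  have hc2b : c2 < (b:ℝ) := by rw [hc2]; linarith
  have hc1I : c1 ∈ unitI :=
    ⟨le_trans a.2.1 (le_of_lt hac1), le_trans (by linarith : c1 ≤ (b:ℝ)) b.2.2⟩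
  set cc1 : ↥unitI := ⟨c1, hc1I⟩ with hcc1
  have hginv1b : (g⁻¹ cc1 : ℝ) < b := by
    apply lt_of_oph_lt hgm
    rw [Equiv.Perm.coe_inv, Equiv.apply_symm_apply]
    show (c1:ℝ) < ca
    linarith
  set b2 : ℝ := max ((g⁻¹ cc1 : ℝ)) ((c2 + (b:ℝ))/2) with hb2
  have hb2b : b2 < (b:ℝ) := max_lt hginv1b (by linarith)
  have hc2b2 : c2 < b2 := lt_of_lt_of_le (by linarith) (le_max_right _ _)
  have hb2g : (g⁻¹ cc1 : ℝ) ≤ b2 := le_max_left _ _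
  obtain ⟨N, hN⟩ := iter_sup hf'm hf'b hpos (z := cc1)
    (show (a:ℝ) < ((cc1:↥unitI):ℝ) from hac1)
    (show ((cc1:↥unitI):ℝ) < b by show (c1:ℝ) < b; linarith) hb2b
  set U : Set ↥unitI := {x | c1 < (x:ℝ) ∧ (x:ℝ) < c2} with hU
  set V : Set ↥unitI := {x | b2 < (x:ℝ) ∧ (x:ℝ) < b} with hV
  have hpI : (ca + c2)/2 ∈ unitI :=
    ⟨le_trans a.2.1 (by linarith), le_trans (by linarith : (ca+c2)/2 ≤ (b:ℝ)) b.2.2⟩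
  set p : ↥unitI := ⟨(ca + c2)/2, hpI⟩ with hp'
  have hpca : ca < (p:ℝ) := by simp [hp']; linarith
  have hpc2 : (p:ℝ) < c2 := by simp [hp']; linarith
  have hpU : p ∈ U := ⟨lt_trans hc1ca hpca, hpc2⟩
  have hdisj : ∀ x : ↥unitI, x ∈ U → x ∉ V := by
    intro x hx hx'
    have := hx.2
    have := hx'.1
    linarith
  have hbounds : ∀ x : ↥unitI, x ∈ U ∪ V → c1 < (x:ℝ) ∧ (x:ℝ) < b := by
    intro x hx
    rcases hx with hx | hx
    · exact ⟨hx.1, by have := hx.2; linarith⟩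
    · exact ⟨by have := hx.1; linarith, hx.2⟩
  have hψval : ∀ x : ↥unitI, x ∈ U ∪ V → b2 < ((f'^N) x : ℝ) ∧ ((f'^N) x : ℝ) < b := by
    intro x hx
    obtain ⟨h1, h2⟩ := hbounds x hx
    constructor
    · calc b2 < ((f'^N) cc1 : ℝ) := hN
        _ < (f'^N) x := oph_lt (oph_pow hf'm N) h1
    · have := oph_lt (oph_pow hf'm N) h2
      rwa [pow_fix hf'b N] at this
  refine ⟨g * f'^N, G.mul_mem hg (G.pow_mem hf'G N), f'^N, G.pow_mem hf'G N,
    pingpong hdisj hpU ?_ ?_⟩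
  · intro x hx
    obtain ⟨h1, h2⟩ := hψval x hx
    simp only [Equiv.Perm.mul_apply]
    have hhigh : (g ((f'^N) x) : ℝ) < ca := oph_lt hgm h2
    have hlow : c1 < (g ((f'^N) x) : ℝ) := by
      have := oph_lt hgm (lt_of_le_of_lt hb2g h1)
      rwa [Equiv.Perm.coe_inv, Equiv.apply_symm_apply] at this
    refine ⟨⟨hlow, lt_trans hhigh hcac2⟩, ?_⟩
    intro hc
    have := congrArg (fun z : ↥unitI => (z:ℝ)) hc
    rw [this] at hhigh
    linarith
  · intro x hx
    exact hψval x hx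

end Stmt13Aux

theorem stmt13 (G : Subgroup IntervalMap) (hGhomeo : HomeoSubgroup G)
    (hGfix : FinFix G) (hGnab : ¬ ∀ a ∈ G, ∀ b ∈ G, a * b = b * a) :
    (∃ f ∈ G, ∃ g ∈ G, CrossedPair f g) ∧
      ∃ a ∈ G, ∃ b ∈ G, FreeSemigroupPair a b := by
  have hcross := Stmt13Aux.exists_crossed G hGhomeo hGfix hGnab
  refine ⟨hcross, ?_⟩
  obtain ⟨f, hf, g, hg, a, b, hab, hcr⟩ := hcross
  rcases hcr with ⟨hfa, hfb, hfpf, hcase⟩ | ⟨hfa, hfb, hfpf, hcase⟩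
  · rcases hcase with ⟨h1, h2⟩ | ⟨h1, h2⟩
    · exact Stmt13Aux.freepair_case1 G hGhomeo hf hg hab hfa hfb hfpf h1 h2
    · exact Stmt13Aux.freepair_case2 G hGhomeo hf hg hab hfa hfb hfpf h1 h2
  · rcases hcase with ⟨h1, h2⟩ | ⟨h1, h2⟩
    · exact Stmt13Aux.freepair_case1 G hGhomeo hg hf hab hfa hfb hfpf h1 h2
    · exact Stmt13Aux.freepair_case2 G hGhomeo hg hf hab hfa hfb hfpf h1 h2

end
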